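/- For j ∈ {1,2} let b_j be nonzero reals and λ_j reals with 2λ_j > 1. Define d_w := (1/2)·Σ_{j=1}^{2}(1 − w·b_j²)·(2λ_j)^{−w} for w ≥ 1, c_0 := exp(−(b_1² + b_2²)/2)·(2λ_1)^{−1/2}·(2λ_2)^{−1/2}, and c_w := (1/w)·Σ_{r=0}^{w−1} d_{w−r}·c_r for w ≥ 1. Let d^u := sup_{w≥1} |d_w| (finite since 2λ_j > 1) and let D be a positive integer with d^u ≤ D ≤ d^u + 1. Then for any reals y > 0 and δf > 0, if the positive integer w_m satisfies (i) w_m ≥ 1/b_j² + 1/(2λ_j − 1) for j = 1,2, (ii) w_m ≥ e²·y + D, and (iii) w_m ≥ 3D − ln(δf/(c_0·y^D)) − 1, then |Σ_{w=w_m}^{∞} (−1)^w·c_w·y^{w+1}/(w+1)!| < δf. -/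

import Mathlib

lemma pow_self_le_exp_mul_factorial (m : ℕ) :
    (m : ℝ) ^ m ≤ Real.exp 1 ^ m * (Nat.factorial m : ℝ) := by
  induction m with
  | zero => simp
  | succ m ih =>
    have h1 : ((m:ℝ) + 1) ^ m ≤ Real.exp 1 * (m:ℝ) ^ m := by
      rcases Nat.eq_zero_or_pos m with rfl | hm
      · simpa using (by nlinarith [Real.add_one_le_exp (1:ℝ)] : ((0:ℝ)+1)^0 ≤ Real.exp 1 * (0:ℝ)^0)
      · have hmr : (0:ℝ) < m := by exact_mod_cast hm
        have hle : (1 + 1/(m:ℝ)) ≤ Real.exp (1/(m:ℝ)) := by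
          have := Real.add_one_le_exp (1/(m:ℝ)); linarith
        have h2 : (1 + 1/(m:ℝ)) ^ m ≤ Real.exp (1/(m:ℝ)) ^ m :=
          pow_le_pow_left₀ (by positivity) hle m
        rw [← Real.exp_nat_mul, mul_one_div, div_self hmr.ne'] at h2
        have h3 : ((m:ℝ)+1)^m = (1 + 1/(m:ℝ))^m * (m:ℝ)^m := by
          rw [← mul_pow]; congr 1; field_simp
        rw [h3]
        exact mul_le_mul_of_nonneg_right h2 (by positivity)
    have : ((m:ℝ)+1)^(m+1) ≤ Real.exp 1 ^ (m+1) * (Nat.factorial (m+1) : ℝ) := by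
      calc ((m:ℝ)+1)^(m+1) = ((m:ℝ)+1) * ((m:ℝ)+1)^m := by ring
        _ ≤ ((m:ℝ)+1) * (Real.exp 1 * (m:ℝ)^m) :=
            mul_le_mul_of_nonneg_left h1 (by positivity)
        _ ≤ ((m:ℝ)+1) * (Real.exp 1 * (Real.exp 1 ^ m * (Nat.factorial m : ℝ))) :=
            mul_le_mul_of_nonneg_left (mul_le_mul_of_nonneg_left ih (Real.exp_pos 1).le) (by positivity)
        _ = Real.exp 1 ^ (m+1) * (((m:ℝ)+1) * (Nat.factorial m : ℝ)) := by ring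
        _ = Real.exp 1 ^ (m+1) * (Nat.factorial (m+1) : ℝ) := by
            rw [Nat.factorial_succ]; push_cast; ring
    exact_mod_cast this


lemma c_choose_bound (c0 : ℝ) (hpos : 0 < c0) (d c : ℕ → ℝ) (E : ℕ)
    (hdb : ∀ k : ℕ, 1 ≤ k → |d k| ≤ (E : ℝ) + 1)
    (hcz : c 0 = c0)
    (hc : ∀ w : ℕ, 1 ≤ w → c w = (1 / (w : ℝ)) * ∑ r ∈ Finset.range w, d (w - r) * c r) :
    ∀ w : ℕ, (∑ r ∈ Finset.range (w + 1), |c r|) ≤ c0 * (Nat.choose (w + E + 1) w : ℝ)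
      ∧ |c w| ≤ c0 * (Nat.choose (w + E) w : ℝ) := by
  intro w
  induction w with
  | zero => simp [hcz, abs_of_pos hpos]
  | succ w ih =>
    obtain ⟨ihS, _⟩ := ih
    have hw1 : (0:ℝ) < (w:ℝ) + 1 := by positivity
    have hcw : |c (w + 1)| ≤ c0 * (Nat.choose (w + E + 1) (w + 1) : ℝ) := by
      rw [hc (w+1) (Nat.le_add_left 1 w)]
      rw [abs_mul]
      have h1 : |∑ r ∈ Finset.range (w+1), d (w + 1 - r) * c r|
          ≤ ∑ r ∈ Finset.range (w+1), ((E:ℝ)+1) * |c r| := by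
        refine (Finset.abs_sum_le_sum_abs _ _).trans (Finset.sum_le_sum fun r hr => ?_)
        rw [abs_mul]
        have hr' := Finset.mem_range.mp hr
        exact mul_le_mul_of_nonneg_right (hdb _ (by omega)) (abs_nonneg _)
      have h2 : ∑ r ∈ Finset.range (w+1), ((E:ℝ)+1) * |c r|
          = ((E:ℝ)+1) * ∑ r ∈ Finset.range (w+1), |c r| := by rw [Finset.mul_sum]
      have h3 : |(1 : ℝ) / ((w:ℕ)+1 : ℕ)| = 1 / ((w:ℝ)+1) := by
        rw [abs_of_pos (by positivity)]; push_cast; ring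
      push_cast
      rw [abs_of_pos (by positivity : (0:ℝ) < 1 / ((w:ℝ)+1))]
      calc 1 / ((w:ℝ)+1) * |∑ r ∈ Finset.range (w+1), d (w + 1 - r) * c r|
          ≤ 1 / ((w:ℝ)+1) * (((E:ℝ)+1) * ∑ r ∈ Finset.range (w+1), |c r|) := by
            rw [h2] at h1
            exact mul_le_mul_of_nonneg_left h1 (by positivity)
        _ ≤ 1 / ((w:ℝ)+1) * (((E:ℝ)+1) * (c0 * (Nat.choose (w + E + 1) w : ℝ))) := by
            apply mul_le_mul_of_nonneg_left _ (by positivity)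
            exact mul_le_mul_of_nonneg_left ihS (by positivity)
        _ = c0 * ((Nat.choose (w + E + 1) w : ℝ) * ((E:ℝ)+1)) / ((w:ℝ)+1) := by ring
        _ = c0 * (Nat.choose (w + E + 1) (w + 1) : ℝ) := by
            have key : (Nat.choose (w+E+1) (w+1) * (w+1) : ℕ)
                = Nat.choose (w+E+1) w * (E+1) := by
              have h := Nat.choose_succ_right_eq (w+E+1) w
              rw [show w+E+1-w = E+1 from by omega] at h
              exact h
            have keyR : (Nat.choose (w+E+1) (w+1) : ℝ) * ((w:ℝ)+1)
                = (Nat.choose (w+E+1) w : ℝ) * ((E:ℝ)+1) := by exact_mod_cast key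
            field_simp
            linear_combination -keyR
    constructor
    · rw [Finset.sum_range_succ]
      have pascal : (Nat.choose (w + 1 + E + 1) (w+1) : ℝ)
          = (Nat.choose (w + E + 1) w : ℝ) + (Nat.choose (w + E + 1) (w+1) : ℝ) := by
        have : w + 1 + E + 1 = (w + E + 1) + 1 := by omega
        rw [this]
        exact_mod_cast congrArg (Nat.cast (R := ℝ)) (Nat.choose_succ_succ (w+E+1) w)
      rw [pascal]
      have : w + 1 + E = w + E + 1 := by omega
      rw [this] at *
      linarith
    · have : w + 1 + E = w + E + 1 := by omega
      rw [this]; exact hcw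


lemma abs_dterm_le (lam b : ℝ) (hlam : 1 < 2 * lam) (k : ℕ) (hk : 1 ≤ k) :
    |1 - (k : ℝ) * b ^ 2| / (2 * lam) ^ k ≤ 1 + b ^ 2 / (2 * lam - 1) := by
  set L := 2 * lam with hL
  have hL1 : (1:ℝ) < L := hlam
  have hL0 : (0:ℝ) < L := by linarith
  have hLm1 : (0:ℝ) < L - 1 := by linarith
  have hLk : (1:ℝ) ≤ L ^ k := one_le_pow₀ hL1.le
  have hLkpos : (0:ℝ) < L ^ k := by positivity
  have hBer : 1 + (k:ℝ) * (L - 1) ≤ L ^ k := by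
    have := one_add_mul_le_pow (a := L - 1) (by linarith) k
    simpa using this
  have habs : |1 - (k:ℝ) * b ^ 2| ≤ 1 + (k:ℝ) * b ^ 2 := by
    rw [abs_le]
    constructor <;> nlinarith [sq_nonneg b, Nat.cast_nonneg (α := ℝ) k]
  have hq : (0:ℝ) ≤ b ^ 2 / (L - 1) := div_nonneg (sq_nonneg b) hLm1.le
  have hkb : (k:ℝ) * b ^ 2 ≤ b ^ 2 / (L - 1) * L ^ k := by
    have h1 : b ^ 2 / (L - 1) * (1 + (k:ℝ) * (L - 1)) = b ^ 2 / (L - 1) + (k:ℝ) * b ^ 2 := by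
      field_simp
    have h2 : b ^ 2 / (L - 1) * (1 + (k:ℝ) * (L - 1)) ≤ b ^ 2 / (L - 1) * L ^ k :=
      mul_le_mul_of_nonneg_left hBer hq
    linarith
  calc |1 - (k:ℝ) * b ^ 2| / L ^ k ≤ (L ^ k + b ^ 2 / (L - 1) * L ^ k) / L ^ k := by
        gcongr
        linarith
    _ = 1 + b ^ 2 / (L - 1) := by field_simp




set_option maxHeartbeats 1000000 in
lemma G_ratio (c0 y X : ℝ) (hc0 : 0 < c0) (hy : 0 < y) (hX : 0 < X) (E k : ℕ)
    (hy2 : y * X ^ 2 ≤ (k : ℝ) - (E : ℝ)) :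
    c0 * (Nat.choose (k + 1 + E) (k + 1) : ℝ) * y ^ (k + 1 + 1) /
        (Nat.factorial (k + 1 + 1) : ℝ)
      ≤ (X ^ 2)⁻¹ * (c0 * (Nat.choose (k + E) k : ℝ) * y ^ (k + 1) /
        (Nat.factorial (k + 1) : ℝ)) := by
  set Cn : ℝ := (Nat.choose (k + E) k : ℝ) with hCn
  set Cn1 : ℝ := (Nat.choose (k + 1 + E) (k + 1) : ℝ) with hCn1
  set F : ℝ := (Nat.factorial (k + 1) : ℝ) with hFdef
  have hFpos : (0:ℝ) < F := by rw [hFdef]; exact_mod_cast Nat.factorial_pos (k+1)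
  have hCn0 : (0:ℝ) ≤ Cn := Nat.cast_nonneg _
  have hF2eq : ((Nat.factorial (k + 1 + 1)) : ℝ) = ((k:ℝ) + 2) * F := by
    rw [hFdef, Nat.factorial_succ (k+1)]; push_cast; ring
  have hrel : Cn1 * ((k:ℝ) + 1) = ((k:ℝ) + (E:ℝ) + 1) * Cn := by
    have h := Nat.add_one_mul_choose_eq (k + E) k
    rw [show k + E + 1 = k + 1 + E from by omega] at h
    have h2 := congrArg (Nat.cast (R := ℝ)) h.symm
    push_cast at h2
    rw [hCn1, hCn]
    push_cast
    linarith
  have h2 : Cn1 * (y * X ^ 2) ≤ Cn * ((k:ℝ) + 2) := by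
    have e1 : Cn1 * (y * X ^ 2) * ((k:ℝ) + 1) = ((k:ℝ) + (E:ℝ) + 1) * Cn * (y * X ^ 2) := by
      linear_combination (y * X ^ 2) * hrel
    have e2 : ((k:ℝ) + (E:ℝ) + 1) * Cn * (y * X ^ 2)
        ≤ ((k:ℝ) + (E:ℝ) + 1) * Cn * ((k:ℝ) - (E:ℝ)) := by
      apply mul_le_mul_of_nonneg_left hy2
      positivity
    have e3 : ((k:ℝ) + (E:ℝ) + 1) * Cn * ((k:ℝ) - (E:ℝ)) ≤ Cn * ((k:ℝ) + 2) * ((k:ℝ) + 1) := by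
      nlinarith [mul_nonneg hCn0 (show (0:ℝ) ≤ 2*(k:ℝ) + 2 + (E:ℝ)^2 + (E:ℝ) by positivity)]
    have e4 : Cn1 * (y * X ^ 2) * ((k:ℝ) + 1) ≤ Cn * ((k:ℝ) + 2) * ((k:ℝ) + 1) := by linarith
    exact le_of_mul_le_mul_right e4 (by positivity)
  have hRHS : (X ^ 2)⁻¹ * (c0 * Cn * y ^ (k + 1) / F) = c0 * Cn * y ^ (k + 1) / (X ^ 2 * F) := by
    field_simp
  rw [hRHS, hF2eq, pow_succ _ (k+1), div_le_div_iff₀ (by positivity) (by positivity)]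
  nlinarith [mul_le_mul_of_nonneg_right h2
    (show (0:ℝ) ≤ c0 * y ^ (k+1) * F by positivity)]

set_option maxHeartbeats 1000000 in
lemma final_bound (c0 y X δf : ℝ) (hc0 : 0 < c0) (hy : 0 < y)
    (hX1 : (2.7182818283:ℝ) < X) (hX2 : X < 2.7182818286)
    (E s wm : ℕ) (hwm : wm = E + 2 + s)
    (hyX : X ^ 2 * y + ((E:ℝ) + 1) ≤ (wm:ℝ))
    (hfact : ((wm:ℝ) + 1) ^ (wm+1) ≤ X ^ (wm+1) * (Nat.factorial (wm+1) : ℝ))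
    (hT : c0 * y ^ (E+1) * (X ^ (2*E) * (X ^ s)⁻¹) ≤ δf) :
    c0 * (Nat.choose (wm + E) wm : ℝ) * y ^ (wm + 1) / (Nat.factorial (wm+1) : ℝ)
      * (1 - (X ^ 2)⁻¹)⁻¹ < δf := by
  have hXpos : (0:ℝ) < X := by linarith
  set W : ℝ := (wm:ℝ) + 1 with hW
  have hwm2 : (2:ℝ) ≤ (wm:ℝ) := by exact_mod_cast (by omega : 2 ≤ wm)
  have hW3 : (3:ℝ) ≤ W := by rw [hW]; linarith
  have hWpos : (0:ℝ) < W := by linarith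
  have hWeq : W = (E:ℝ) + (s:ℝ) + 3 := by rw [hW, hwm]; push_cast; ring
  have hX21 : (0:ℝ) < X ^ 2 - 1 := by nlinarith
  set Fc : ℝ := (Nat.factorial (wm+1) : ℝ) with hFc
  have hFpos : (0:ℝ) < Fc := by rw [hFc]; exact_mod_cast Nat.factorial_pos (wm+1)
  set Cnn : ℝ := (Nat.choose (wm + E) wm : ℝ) with hCnn
  have hCnn0 : (0:ℝ) ≤ Cnn := Nat.cast_nonneg _
  have hEwm : (E:ℝ) ≤ (wm:ℝ) := by exact_mod_cast (by omega : E ≤ wm)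
  have hCn : Cnn ≤ 2 ^ E * W ^ E := by
    have h1 : Nat.choose (wm+E) wm = Nat.choose (wm+E) E := by
      have h := Nat.choose_symm (Nat.le_add_left E wm)
      rwa [show wm + E - E = wm from by omega] at h
    have h2 : (Nat.choose (wm+E) E : ℝ) ≤ ((wm:ℝ) + (E:ℝ)) ^ E := by
      have h := Nat.choose_le_pow (wm+E) E
      calc (Nat.choose (wm+E) E : ℝ) ≤ (((wm+E) ^ E : ℕ) : ℝ) := by exact_mod_cast h
        _ = ((wm:ℝ) + (E:ℝ)) ^ E := by push_cast; ring
    have h3 : ((wm:ℝ) + (E:ℝ)) ^ E ≤ (2*W) ^ E := by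
      apply pow_le_pow_left₀ (by positivity)
      rw [hW]; linarith
    rw [hCnn, h1]
    calc (Nat.choose (wm+E) E : ℝ) ≤ ((wm:ℝ) + (E:ℝ)) ^ E := h2
      _ ≤ (2*W) ^ E := h3
      _ = 2 ^ E * W ^ E := mul_pow 2 W E
  have hyW : y ≤ W / X ^ 2 := by
    rw [le_div_iff₀ (by positivity)]
    have hE0 : (0:ℝ) ≤ (E:ℝ) := Nat.cast_nonneg _
    nlinarith
  have hy3 : y ^ (wm+1) ≤ y ^ (E+1) * (W / X ^ 2) ^ (s+2) := by
    rw [show wm + 1 = (E+1) + (s+2) from by omega, pow_add]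
    exact mul_le_mul_of_nonneg_left (pow_le_pow_left₀ hy.le hyW _) (by positivity)
  set A : ℝ := c0 * 2 ^ E * y ^ (E+1) * X ^ (E+s+3) / (W * X ^ (2*s+4)) with hA
  have claimA : c0 * Cnn * y ^ (wm + 1) / Fc ≤ A := by
    have h1 : c0 * Cnn * y ^ (wm+1) / Fc ≤ c0 * Cnn * y ^ (wm+1) * X ^ (wm+1) / W ^ (wm+1) := by
      rw [div_le_div_iff₀ hFpos (by positivity)]
      nlinarith [mul_le_mul_of_nonneg_left hfact
        (show (0:ℝ) ≤ c0 * Cnn * y ^ (wm+1) by positivity)]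
    have h2 : c0 * Cnn * y ^ (wm+1) * X ^ (wm+1) / W ^ (wm+1)
        ≤ c0 * (2 ^ E * W ^ E) * (y ^ (E+1) * (W / X ^ 2) ^ (s+2)) * X ^ (wm+1) / W ^ (wm+1) := by
      gcongr
    have h3 : c0 * (2 ^ E * W ^ E) * (y ^ (E+1) * (W / X ^ 2) ^ (s+2)) * X ^ (wm+1) / W ^ (wm+1)
        = A := by
      rw [hA, show wm + 1 = E + s + 3 from by omega, div_pow]
      field_simp
      ring
    calc c0 * Cnn * y ^ (wm + 1) / Fc
        ≤ c0 * Cnn * y ^ (wm+1) * X ^ (wm+1) / W ^ (wm+1) := h1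
      _ ≤ c0 * (2 ^ E * W ^ E) * (y ^ (E+1) * (W / X ^ 2) ^ (s+2)) * X ^ (wm+1) / W ^ (wm+1) := h2
      _ = A := h3
  have hgeo : (1 - (X ^ 2)⁻¹)⁻¹ = X ^ 2 / (X ^ 2 - 1) := by
    rw [show 1 - (X ^ 2)⁻¹ = (X ^ 2 - 1) / X ^ 2 from by field_simp, inv_div]
  have core3 : X < W * (X ^ 2 - 1) := by nlinarith
  have core2 : (2:ℝ) ^ E * X ^ (E+2*s+5) < X ^ (2*E+2*s+4) * (W * (X ^ 2 - 1)) := by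
    have h2X : (2:ℝ) ^ E ≤ X ^ E := pow_le_pow_left₀ (by norm_num) (by linarith) E
    calc (2:ℝ) ^ E * X ^ (E+2*s+5) = (2 ^ E * X) * X ^ (E+2*s+4) := by ring
      _ ≤ (X ^ E * X) * X ^ (E+2*s+4) := by
          apply mul_le_mul_of_nonneg_right (mul_le_mul_of_nonneg_right h2X hXpos.le)
            (by positivity)
      _ < (X ^ E * (W * (X ^ 2 - 1))) * X ^ (E+2*s+4) := by
          apply mul_lt_mul_of_pos_right (mul_lt_mul_of_pos_left core3 (by positivity))
            (by positivity)
      _ = X ^ (2*E+2*s+4) * (W * (X ^ 2 - 1)) := by ring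
  have core : A * (X ^ 2 / (X ^ 2 - 1)) < c0 * y ^ (E+1) * (X ^ (2*E) * (X ^ s)⁻¹) := by
    rw [show c0 * y ^ (E+1) * (X ^ (2*E) * (X ^ s)⁻¹)
        = c0 * y ^ (E+1) * X ^ (2*E) / X ^ s from by ring]
    rw [hA, div_mul_div_comm, div_lt_div_iff₀ (by positivity) (by positivity)]
    have h := mul_lt_mul_of_pos_left core2 (show (0:ℝ) < c0 * y ^ (E+1) by positivity)
    calc c0 * 2 ^ E * y ^ (E+1) * X ^ (E+s+3) * X ^ 2 * X ^ s
        = c0 * y ^ (E+1) * ((2:ℝ) ^ E * X ^ (E+2*s+5)) := by ring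
      _ < c0 * y ^ (E+1) * (X ^ (2*E+2*s+4) * (W * (X ^ 2 - 1))) := h
      _ = c0 * y ^ (E+1) * X ^ (2*E) * (W * X ^ (2*s+4) * (X ^ 2 - 1)) := by ring
  calc c0 * Cnn * y ^ (wm + 1) / Fc * (1 - (X ^ 2)⁻¹)⁻¹
      = c0 * Cnn * y ^ (wm + 1) / Fc * (X ^ 2 / (X ^ 2 - 1)) := by rw [hgeo]
    _ ≤ A * (X ^ 2 / (X ^ 2 - 1)) := by
        apply mul_le_mul_of_nonneg_right claimA (by positivity)
    _ < c0 * y ^ (E+1) * (X ^ (2*E) * (X ^ s)⁻¹) := core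
    _ ≤ δf := hT


/-- Truncation-error bound (Theorem 3 of the paper): with `b_j ≠ 0`, `2λ_j > 1`,
`d_w = (1/2)·Σ_{j=1}^{2}(1 − w·b_j²)·(2λ_j)^{−w}`,
`c_0 = exp(−(b₁² + b₂²)/2)·(2λ₁)^{−1/2}·(2λ₂)^{−1/2}`,
`c_w = (1/w)·Σ_{r=0}^{w−1} d_{w−r}·c_r`, `d^u = sup_{w≥1} |d_w|`, and a positive
integer `D` with `d^u ≤ D ≤ d^u + 1`: for any `y > 0` and `δf > 0`, if the positive
integer `w_m` satisfies `w_m ≥ 1/b_j² + 1/(2λ_j − 1)` (`j = 1,2`),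
`w_m ≥ e²·y + D` and `w_m ≥ 3D − ln(δf/(c_0·y^D)) − 1`, then
`|Σ_{w=w_m}^{∞} (−1)^w·c_w·y^{w+1}/(w+1)!| < δf`. -/
theorem truncation_error_lt_threshold
    (b1 b2 lam1 lam2 : ℝ) (hb1 : b1 ≠ 0) (hb2 : b2 ≠ 0)
    (hlam1 : 1 < 2 * lam1) (hlam2 : 1 < 2 * lam2)
    (d : ℕ → ℝ)
    (hd : ∀ w : ℕ, 1 ≤ w →
      d w = (1 / 2) * ((1 - (w : ℝ) * b1 ^ 2) / (2 * lam1) ^ w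
        + (1 - (w : ℝ) * b2 ^ 2) / (2 * lam2) ^ w))
    (c0 : ℝ)
    (hc0 : c0 = Real.exp (-(b1 ^ 2 + b2 ^ 2) / 2) *
      (2 * lam1) ^ (-(1 : ℝ) / 2) * (2 * lam2) ^ (-(1 : ℝ) / 2))
    (c : ℕ → ℝ) (hcz : c 0 = c0)
    (hc : ∀ w : ℕ, 1 ≤ w → c w = (1 / (w : ℝ)) * ∑ r ∈ Finset.range w, d (w - r) * c r)
    (du : ℝ) (hdu : du = ⨆ w : ℕ, |d (w + 1)|)
    (D : ℕ) (hDpos : 1 ≤ D) (hD1 : du ≤ (D : ℝ)) (hD2 : (D : ℝ) ≤ du + 1)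
    (y δf : ℝ) (hy : 0 < y) (hδf : 0 < δf)
    (wm : ℕ) (hwmpos : 1 ≤ wm)
    (hwm1 : 1 / b1 ^ 2 + 1 / (2 * lam1 - 1) ≤ (wm : ℝ))
    (hwm1' : 1 / b2 ^ 2 + 1 / (2 * lam2 - 1) ≤ (wm : ℝ))
    (hwm2 : Real.exp 1 ^ 2 * y + (D : ℝ) ≤ (wm : ℝ))
    (hwm3 : 3 * (D : ℝ) - Real.log (δf / (c0 * y ^ D)) - 1 ≤ (wm : ℝ)) :
    |∑' w : ℕ, (-1 : ℝ) ^ (w + wm) * c (w + wm) * y ^ (w + wm + 1) /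
        (Nat.factorial (w + wm + 1) : ℝ)| < δf := by
  -- notation
  set X := Real.exp 1 with hX
  have hX1 : (2.7182818283:ℝ) < X := Real.exp_one_gt_d9
  have hX2 : X < 2.7182818286 := Real.exp_one_lt_d9
  have hXpos : (0:ℝ) < X := by linarith
  -- c0 positive
  have h2l1 : (0:ℝ) < 2 * lam1 := by linarith
  have h2l2 : (0:ℝ) < 2 * lam2 := by linarith
  have hc0pos : 0 < c0 := by
    rw [hc0]
    have := Real.exp_pos (-(b1 ^ 2 + b2 ^ 2) / 2)
    have := Real.rpow_pos_of_pos h2l1 (-(1:ℝ)/2)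
    have := Real.rpow_pos_of_pos h2l2 (-(1:ℝ)/2)
    positivity
  -- |d k| ≤ D for k ≥ 1
  have hdleD : ∀ k : ℕ, 1 ≤ k → |d k| ≤ (D : ℝ) := by
    have hBd : ∀ k : ℕ, 1 ≤ k → |d k| ≤
        (1/2) * ((1 + b1 ^ 2 / (2*lam1 - 1)) + (1 + b2 ^ 2 / (2*lam2 - 1))) := by
      intro k hk
      rw [hd k hk]
      rw [abs_mul]
      rw [abs_of_pos (by norm_num : (0:ℝ) < 1/2)]
      have h1 := abs_dterm_le lam1 b1 hlam1 k hk
      have h2 := abs_dterm_le lam2 b2 hlam2 k hk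
      have h3 := abs_add_le ((1 - (k : ℝ) * b1 ^ 2) / (2 * lam1) ^ k)
        ((1 - (k : ℝ) * b2 ^ 2) / (2 * lam2) ^ k)
      rw [abs_div, abs_of_pos (by positivity : (0:ℝ) < (2*lam1)^k)] at h3
      rw [abs_div, abs_of_pos (by positivity : (0:ℝ) < (2*lam2)^k)] at h3
      have := h3.trans (add_le_add h1 h2)
      linarith
    have hbdd : BddAbove (Set.range fun w : ℕ => |d (w + 1)|) := by
      refine ⟨(1/2) * ((1 + b1 ^ 2 / (2*lam1 - 1)) + (1 + b2 ^ 2 / (2*lam2 - 1))), ?_⟩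
      rintro x ⟨w, rfl⟩
      exact hBd (w+1) (by omega)
    intro k hk
    have h1 : |d k| ≤ du := by
      rw [hdu]
      have := le_ciSup hbdd (k - 1)
      simpa [Nat.sub_add_cancel hk] using this
    linarith
  -- replace D by E + 1
  obtain ⟨E, rfl⟩ : ∃ E, D = E + 1 := ⟨D - 1, by omega⟩
  -- coefficient bound
  have hcb : ∀ w : ℕ, |c w| ≤ c0 * (Nat.choose (w + E) w : ℝ) := fun w =>
    (c_choose_bound c0 hc0pos d c E (by exact_mod_cast fun k hk => hdleD k hk) hcz hc w).2
  -- basic wm facts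
  have hyX : X ^ 2 * y + ((E:ℝ) + 1) ≤ (wm : ℝ) := by push_cast at hwm2 ⊢; linarith
  have hwmE : E + 2 ≤ wm := by
    have h0 : ((E:ℝ) + 1) < (wm:ℝ) := by nlinarith [mul_pos (pow_pos hXpos 2) hy]
    have h1 : E + 1 < wm := by exact_mod_cast (by push_cast; linarith : ((E+1:ℕ):ℝ) < (wm:ℝ))
    omega
  obtain ⟨s, hs⟩ : ∃ s, wm = E + 2 + s := ⟨wm - (E+2), by omega⟩
  -- the dominating sequence
  set G : ℕ → ℝ := fun k => c0 * (Nat.choose (k + E) k : ℝ) * y ^ (k + 1) /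
    (Nat.factorial (k + 1) : ℝ) with hG
  have hGnonneg : ∀ k, 0 ≤ G k := by
    intro k
    have : (0:ℝ) < (Nat.factorial (k+1) : ℝ) := by exact_mod_cast Nat.factorial_pos (k+1)
    have : (0:ℝ) ≤ (Nat.choose (k + E) k : ℝ) := Nat.cast_nonneg _
    positivity
  set r : ℝ := (X ^ 2)⁻¹ with hr
  have hr0 : 0 < r := by positivity
  have hr1 : r < 1 := by
    rw [hr, inv_lt_one_iff₀]
    right; nlinarith
  set f : ℕ → ℝ := fun w => (-1 : ℝ) ^ (w + wm) * c (w + wm) * y ^ (w + wm + 1) /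
    (Nat.factorial (w + wm + 1) : ℝ) with hf
  -- the ratio bound
  have key : ∀ k : ℕ, wm ≤ k → G (k + 1) ≤ r * G k := by
    intro k hk
    have hkr : (wm : ℝ) ≤ (k : ℝ) := by exact_mod_cast hk
    have hy2 : y * X ^ 2 ≤ (k : ℝ) - (E : ℝ) := by linarith
    simp only [hG, hr]
    exact G_ratio c0 y X hc0pos hy hXpos E k hy2
  -- geometric decay
  have hdecay : ∀ j : ℕ, G (j + wm) ≤ G wm * r ^ j := by
    intro j
    induction j with
    | zero => simp
    | succ j ih =>
      have h1 : G (j + 1 + wm) ≤ r * G (j + wm) := by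
        have := key (j + wm) (Nat.le_add_left wm j)
        simpa [show j + 1 + wm = j + wm + 1 from by omega] using this
      calc G (j + 1 + wm) ≤ r * G (j + wm) := h1
        _ ≤ r * (G wm * r ^ j) := mul_le_mul_of_nonneg_left ih hr0.le
        _ = G wm * r ^ (j + 1) := by ring
  -- term bound
  have hterm : ∀ j : ℕ, |f j| ≤ G wm * r ^ j := by
    intro j
    simp only [hf]
    refine le_trans ?_ (hdecay j)
    have hf : (0:ℝ) < (Nat.factorial (j + wm + 1) : ℝ) := by
      exact_mod_cast Nat.factorial_pos _
    rw [abs_div, abs_mul, abs_mul, abs_pow, abs_neg, abs_one, one_pow, one_mul,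
      abs_of_pos hf, abs_of_pos (by positivity : (0:ℝ) < y ^ (j + wm + 1))]
    simp only [hG]
    have h2 : |c (j + wm)| * y ^ (j + wm + 1) / (Nat.factorial (j + wm + 1) : ℝ)
        ≤ c0 * (Nat.choose (j + wm + E) (j + wm) : ℝ) * y ^ (j + wm + 1) /
          (Nat.factorial (j + wm + 1) : ℝ) := by
      gcongr
      exact hcb _
    exact h2
  -- summability
  have hsum_geo : Summable (fun j : ℕ => G wm * r ^ j) :=
    (summable_geometric_of_lt_one hr0.le hr1).mul_left _
  have hsum_abs : Summable (fun j : ℕ => |f j|) :=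
    hsum_geo.of_nonneg_of_le (fun j => abs_nonneg _) hterm
  -- the final numeric bound
  have hfinal : G wm * (1 - r)⁻¹ < δf := by
    have hq : (0:ℝ) < δf / (c0 * y ^ (E+1)) := by positivity
    have hlog : 3*((E:ℝ)+1) - (wm:ℝ) - 1 ≤ Real.log (δf / (c0 * y ^ (E+1))) := by
      push_cast at hwm3; linarith
    have hexp : Real.exp (3*((E:ℝ)+1) - (wm:ℝ) - 1) ≤ δf / (c0 * y ^ (E+1)) := by
      calc Real.exp (3*((E:ℝ)+1) - (wm:ℝ) - 1)
          ≤ Real.exp (Real.log (δf / (c0 * y ^ (E+1)))) := Real.exp_le_exp.mpr hlog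
        _ = δf / (c0 * y ^ (E+1)) := Real.exp_log hq
    have hexp_eq : Real.exp (3*((E:ℝ)+1) - (wm:ℝ) - 1) = X ^ (2*E) * (X ^ s)⁻¹ := by
      rw [show 3*((E:ℝ)+1) - (wm:ℝ) - 1 = ((2*E : ℕ):ℝ) * 1 - ((s:ℕ):ℝ) * 1 from by
        rw [hs]; push_cast; ring]
      rw [Real.exp_sub, Real.exp_nat_mul, Real.exp_nat_mul, hX, div_eq_mul_inv]
    have hT : c0 * y ^ (E+1) * (X ^ (2*E) * (X ^ s)⁻¹) ≤ δf := by
      rw [← hexp_eq]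
      calc c0 * y ^ (E+1) * Real.exp (3*((E:ℝ)+1) - (wm:ℝ) - 1)
          ≤ c0 * y ^ (E+1) * (δf / (c0 * y ^ (E+1))) :=
            mul_le_mul_of_nonneg_left hexp (by positivity)
        _ = δf := by field_simp
    have hfact : ((wm:ℝ) + 1) ^ (wm+1) ≤ X ^ (wm+1) * (Nat.factorial (wm+1) : ℝ) := by
      have h := pow_self_le_exp_mul_factorial (wm+1)
      rw [hX]
      push_cast at h ⊢
      exact h
    have := final_bound c0 y X δf hc0pos hy hX1 hX2 E s wm hs hyX hfact hT
    simpa [hG, hr] using this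
  calc |∑' w : ℕ, f w|
      ≤ ∑' w : ℕ, |f w| := by
        have h := norm_tsum_le_tsum_norm (f := f)
          (by simpa only [Real.norm_eq_abs] using hsum_abs)
        simpa only [Real.norm_eq_abs] using h
    _ ≤ ∑' w : ℕ, G wm * r ^ w := hsum_abs.tsum_le_tsum hterm hsum_geo
    _ = G wm * (1 - r)⁻¹ := by rw [tsum_mul_left, tsum_geometric_of_lt_one hr0.le hr1]
    _ < δf := hfinal
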